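/- Clifford's theorem: let Γ be a finite group, ρ an irreducible finite-dimensional complex representation of Γ, and N ⊴ Γ a normal subgroup. Let τ be an irreducible N-subrepresentation of the restriction ρ|_N, let σ be the τ-isotypic component of ρ|_N (the sum of all N-subrepresentations of ρ|_N isomorphic to τ), and let Δ = {g ∈ Γ | τ^g ≅ τ} be the stabilizer of the isomorphism class of τ under the adjoint action, where τ^g(n) := τ(g⁻¹ n g). Then the subspace σ is invariant under ρ(Δ), and, viewed as a representation of Δ, it satisfies ρ ≅ Ind_Δ^Γ σ, the representation of Γ induced from σ. -/

import Mathlib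

/-- A representation is irreducible if the space is nonzero and the only invariant
subspaces are `⊥` and `⊤`. -/
def IsIrredRep {G V : Type*} [Group G] [AddCommGroup V] [Module ℂ V]
    (ρ : Representation ℂ G V) : Prop :=
  Nontrivial V ∧ ∀ U : Submodule ℂ V, (∀ g : G, ∀ v ∈ U, ρ g v ∈ U) → U = ⊥ ∨ U = ⊤

/-- Two representations of the same group are isomorphic if there is an equivariant linear
equivalence between the underlying spaces. -/
def RepIso {G V₁ V₂ : Type*} [Group G] [AddCommGroup V₁] [Module ℂ V₁]
    [AddCommGroup V₂] [Module ℂ V₂]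
    (ρ₁ : Representation ℂ G V₁) (ρ₂ : Representation ℂ G V₂) : Prop :=
  ∃ e : V₁ ≃ₗ[ℂ] V₂, ∀ (g : G) (v : V₁), e (ρ₁ g v) = ρ₂ g (e v)

/-- The representation of a subgroup `H ≤ Γ` on an `H`-invariant subspace `U`. -/
def subRep {Γ V : Type*} [Group Γ] [AddCommGroup V] [Module ℂ V]
    (ρ : Representation ℂ Γ V) (H : Subgroup Γ) (U : Submodule ℂ V)
    (hU : ∀ h ∈ H, ∀ v ∈ U, ρ h v ∈ U) : Representation ℂ H U where
  toFun h := (ρ (h : Γ)).restrict (fun v hv => hU h h.2 v hv)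
  map_one' := by
    ext v
    simp [LinearMap.restrict_coe_apply]
  map_mul' a b := by
    ext v
    simp [LinearMap.restrict_coe_apply]

/-- For `g : Γ` and an `N`-invariant subspace `W` (with `N ⊴ Γ`), the conjugated
representation `τ^g` of `N` on `W`, sending `n` to the action of `g⁻¹ n g`. -/
def conjSubRep {Γ V : Type*} [Group Γ] [AddCommGroup V] [Module ℂ V]
    (ρ : Representation ℂ Γ V) (N : Subgroup Γ) (hN : N.Normal) (W : Submodule ℂ V)
    (hW : ∀ n ∈ N, ∀ v ∈ W, ρ n v ∈ W) (g : Γ) : Representation ℂ N W where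
  toFun n := (ρ (g⁻¹ * (n : Γ) * g)).restrict
    (fun v hv => hW _ (by simpa using hN.conj_mem _ n.2 g⁻¹) v hv)
  map_one' := by
    ext v
    simp [LinearMap.restrict_coe_apply]
  map_mul' a b := by
    ext v
    have h : g⁻¹ * (↑(a * b) : Γ) * g = (g⁻¹ * ↑a * g) * (g⁻¹ * ↑b * g) := by
      simp only [Subgroup.coe_mul]
      group
    simp only [LinearMap.restrict_coe_apply, Module.End.mul_apply]
    rw [h, map_mul]
    rfl

/-- The space of the representation of `Γ` induced from a representation `σ` of a subgroup
`Δ ≤ Γ`: functions `f : Γ → W` with `f (δ * g) = σ δ (f g)`. -/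
def indSubmodule {Γ : Type*} [Group Γ] (Δ : Subgroup Γ) {W : Type*} [AddCommGroup W]
    [Module ℂ W] (σ : Representation ℂ Δ W) : Submodule ℂ (Γ → W) where
  carrier := {f | ∀ (δ : Δ) (g : Γ), f ((δ : Γ) * g) = σ δ (f g)}
  add_mem' := by
    intro f₁ f₂ h₁ h₂ δ g
    simp [h₁ δ g, h₂ δ g]
  zero_mem' := by
    intro δ g
    simp
  smul_mem' := by
    intro c f hf δ g
    simp [hf δ g]

/-- The representation of `Γ` induced from a representation `σ` of a subgroup `Δ ≤ Γ`,
acting by right translation on `indSubmodule Δ σ`. -/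
def indRep {Γ : Type*} [Group Γ] (Δ : Subgroup Γ) {W : Type*} [AddCommGroup W] [Module ℂ W]
    (σ : Representation ℂ Δ W) : Representation ℂ Γ (indSubmodule Δ σ) where
  toFun h :=
    { toFun := fun f => ⟨fun g => (f : Γ → W) (g * h), fun δ g => by
        show (f : Γ → W) ((δ : Γ) * g * h) = σ δ ((f : Γ → W) (g * h))
        rw [mul_assoc]
        exact f.2 δ (g * h)⟩
      map_add' := fun f₁ f₂ => rfl
      map_smul' := fun c f => rfl }
  map_one' := by
    refine LinearMap.ext fun f => Subtype.ext (funext fun g => ?_)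
    simp
  map_mul' a b := by
    refine LinearMap.ext fun f => Subtype.ext (funext fun g => ?_)
    simp [mul_assoc]


section Helpers

variable {G V₁ V₂ V₃ : Type*} [Group G] [AddCommGroup V₁] [Module ℂ V₁]
  [AddCommGroup V₂] [Module ℂ V₂] [AddCommGroup V₃] [Module ℂ V₃]

lemma repIso_refl (ρ : Representation ℂ G V₁) : RepIso ρ ρ :=
  ⟨LinearEquiv.refl ℂ V₁, fun _ _ => rfl⟩

lemma repIso_symm {ρ₁ : Representation ℂ G V₁} {ρ₂ : Representation ℂ G V₂}
    (h : RepIso ρ₁ ρ₂) : RepIso ρ₂ ρ₁ := by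
  obtain ⟨e, he⟩ := h
  refine ⟨e.symm, fun g v => e.injective ?_⟩
  rw [e.apply_symm_apply, he, e.apply_symm_apply]

lemma repIso_trans {ρ₁ : Representation ℂ G V₁} {ρ₂ : Representation ℂ G V₂}
    {ρ₃ : Representation ℂ G V₃} (h12 : RepIso ρ₁ ρ₂) (h23 : RepIso ρ₂ ρ₃) :
    RepIso ρ₁ ρ₃ := by
  obtain ⟨e, he⟩ := h12
  obtain ⟨e', he'⟩ := h23
  exact ⟨e ≪≫ₗ e', fun g v => by simp [LinearEquiv.trans_apply, he, he']⟩

lemma repIso_irred {ρ₁ : Representation ℂ G V₁} {ρ₂ : Representation ℂ G V₂}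
    (h : RepIso ρ₁ ρ₂) (h₂ : IsIrredRep ρ₂) : IsIrredRep ρ₁ := by
  obtain ⟨e, he⟩ := h
  obtain ⟨nt, hs⟩ := h₂
  refine ⟨e.toEquiv.nontrivial, fun U hU => ?_⟩
  have hinv : ∀ g : G, ∀ v ∈ U.map (e : V₁ →ₗ[ℂ] V₂), ρ₂ g v ∈ U.map (e : V₁ →ₗ[ℂ] V₂) := by
    rintro g v ⟨u, hu, rfl⟩
    exact ⟨ρ₁ g u, hU g u hu, he g u⟩
  rcases hs (U.map (e : V₁ →ₗ[ℂ] V₂)) hinv with hbot | htop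
  · left
    rw [eq_bot_iff]
    intro u hu
    have : e u ∈ U.map (e : V₁ →ₗ[ℂ] V₂) := ⟨u, hu, rfl⟩
    rw [hbot, Submodule.mem_bot] at this
    have := e.injective (by rw [this, map_zero] : e u = e 0)
    simpa using this
  · right
    rw [eq_top_iff]
    intro u _
    have : e u ∈ U.map (e : V₁ →ₗ[ℂ] V₂) := by rw [htop]; trivial
    obtain ⟨u', hu', heq⟩ := this
    rwa [← e.injective heq]

end Helpers

section ConjLemmas

variable {Γ V : Type} [Group Γ] [AddCommGroup V] [Module ℂ V]
  (ρ : Representation ℂ Γ V) (N : Subgroup Γ)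

lemma rho_mul_apply (a b : Γ) (v : V) : ρ a (ρ b v) = ρ (a * b) v := by
  rw [map_mul]; rfl

lemma rho_inj (g : Γ) : Function.Injective (ρ g) := by
  intro a b hab
  have h2 := congrArg (ρ g⁻¹) hab
  rwa [rho_mul_apply, rho_mul_apply, inv_mul_cancel, map_one, Module.End.one_apply,
    Module.End.one_apply] at h2

@[simp] lemma subRep_coe (H : Subgroup Γ) (U : Submodule ℂ V)
    (hU : ∀ h ∈ H, ∀ v ∈ U, ρ h v ∈ U) (h : H) (v : U) :
    ((subRep ρ H U hU h v : U) : V) = ρ (h : Γ) (v : V) := rfl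

@[simp] lemma conjSubRep_coe (hN : N.Normal) (W : Submodule ℂ V) (hW : ∀ n ∈ N, ∀ v ∈ W, ρ n v ∈ W)
    (g : Γ) (n : N) (v : W) :
    ((conjSubRep ρ N hN W hW g n v : W) : V) = ρ (g⁻¹ * (n : Γ) * g) (v : V) := rfl

lemma map_invariant (hN : N.Normal) (U : Submodule ℂ V) (hU : ∀ n ∈ N, ∀ v ∈ U, ρ n v ∈ U) (g : Γ) :
    ∀ n ∈ N, ∀ v ∈ U.map (ρ g), ρ n v ∈ U.map (ρ g) := by
  rintro n hn v ⟨u, hu, rfl⟩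
  refine ⟨ρ (g⁻¹ * n * g) u, hU _ (by simpa using hN.conj_mem _ hn g⁻¹) u hu, ?_⟩
  rw [rho_mul_apply, rho_mul_apply]
  congr 1
  group

lemma conj_map_iso (hN : N.Normal) (U : Submodule ℂ V) (hU : ∀ n ∈ N, ∀ v ∈ U, ρ n v ∈ U) (g : Γ) :
    RepIso (conjSubRep ρ N hN U hU g)
      (subRep ρ N (U.map (ρ g)) (map_invariant ρ N hN U hU g)) := by
  set f : U →ₗ[ℂ] (U.map (ρ g)) :=
    LinearMap.codRestrict (U.map (ρ g)) ((ρ g).domRestrict U)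
      (fun u => Submodule.mem_map_of_mem u.2) with hf
  have hfval : ∀ u : U, ((f u : U.map (ρ g)) : V) = ρ g (u : V) := fun u => rfl
  have hbij : Function.Bijective f := by
    constructor
    · intro a b hab
      have := congrArg (Subtype.val) hab
      rw [hfval, hfval] at this
      exact Subtype.ext (rho_inj ρ g this)
    · rintro ⟨v, u, hu, rfl⟩
      exact ⟨⟨u, hu⟩, Subtype.ext rfl⟩
  refine ⟨LinearEquiv.ofBijective f hbij, fun n v => Subtype.ext ?_⟩
  show ρ g (ρ (g⁻¹ * (n : Γ) * g) (v : V)) = ρ (n : Γ) (ρ g (v : V))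
  rw [rho_mul_apply, rho_mul_apply]
  congr 1
  group

lemma conj_iso_of_iso (hN : N.Normal) (U : Submodule ℂ V) (hU : ∀ n ∈ N, ∀ v ∈ U, ρ n v ∈ U)
    (W : Submodule ℂ V) (hW : ∀ n ∈ N, ∀ v ∈ W, ρ n v ∈ W) (g : Γ)
    (h : RepIso (subRep ρ N U hU) (subRep ρ N W hW)) :
    RepIso (conjSubRep ρ N hN U hU g) (conjSubRep ρ N hN W hW g) := by
  obtain ⟨e, he⟩ := h
  refine ⟨e, fun n v => ?_⟩
  have hm : g⁻¹ * (n : Γ) * g ∈ N := by simpa using hN.conj_mem _ n.2 g⁻¹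
  have h1 : conjSubRep ρ N hN U hU g n v = subRep ρ N U hU ⟨g⁻¹ * (n : Γ) * g, hm⟩ v :=
    Subtype.ext rfl
  have h2 : conjSubRep ρ N hN W hW g n (e v) =
      subRep ρ N W hW ⟨g⁻¹ * (n : Γ) * g, hm⟩ (e v) := Subtype.ext rfl
  rw [h1, h2]
  exact he _ v

lemma conj_conj_iso (hN : N.Normal) (W : Submodule ℂ V) (hW : ∀ n ∈ N, ∀ v ∈ W, ρ n v ∈ W) (h h' : Γ)
    (hiso : RepIso (conjSubRep ρ N hN W hW h) (conjSubRep ρ N hN W hW h')) :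
    RepIso (subRep ρ N W hW) (conjSubRep ρ N hN W hW (h⁻¹ * h')) := by
  obtain ⟨e, he⟩ := hiso
  refine ⟨e, fun m w => ?_⟩
  have hm : h * (m : Γ) * h⁻¹ ∈ N := hN.conj_mem _ m.2 h
  have h1 : subRep ρ N W hW m w = conjSubRep ρ N hN W hW h ⟨h * (m : Γ) * h⁻¹, hm⟩ w := by
    apply Subtype.ext
    show ρ (m : Γ) (w : V) = ρ (h⁻¹ * (h * (m : Γ) * h⁻¹) * h) (w : V)
    have : h⁻¹ * (h * (m : Γ) * h⁻¹) * h = (m : Γ) := by group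
    rw [this]
  have h2 : conjSubRep ρ N hN W hW h' ⟨h * (m : Γ) * h⁻¹, hm⟩ (e w) =
      conjSubRep ρ N hN W hW (h⁻¹ * h') m (e w) := by
    apply Subtype.ext
    show ρ (h'⁻¹ * (h * (m : Γ) * h⁻¹) * h') ((e w : W) : V)
      = ρ ((h⁻¹ * h')⁻¹ * (m : Γ) * (h⁻¹ * h')) ((e w : W) : V)
    have : h'⁻¹ * (h * (m : Γ) * h⁻¹) * h' = (h⁻¹ * h')⁻¹ * (m : Γ) * (h⁻¹ * h') := by group
    rw [this]
  rw [h1, ← h2]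
  exact he _ w

lemma conj_irred (hN : N.Normal) (W : Submodule ℂ V) (hW : ∀ n ∈ N, ∀ v ∈ W, ρ n v ∈ W) (g : Γ)
    (hτ : IsIrredRep (subRep ρ N W hW)) : IsIrredRep (conjSubRep ρ N hN W hW g) := by
  refine ⟨hτ.1, fun U' hU' => hτ.2 U' ?_⟩
  intro m v hv
  have hm : g * (m : Γ) * g⁻¹ ∈ N := hN.conj_mem _ m.2 g
  have key : subRep ρ N W hW m v = conjSubRep ρ N hN W hW g ⟨g * (m : Γ) * g⁻¹, hm⟩ v := by
    apply Subtype.ext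
    show ρ (m : Γ) (v : V) = ρ (g⁻¹ * (g * (m : Γ) * g⁻¹) * g) (v : V)
    have : g⁻¹ * (g * (m : Γ) * g⁻¹) * g = (m : Γ) := by group
    rw [this]
  rw [key]
  exact hU' _ v hv

end ConjLemmas

section ProjLemmas

variable {Γ V : Type} [Group Γ] [AddCommGroup V] [Module ℂ V]

lemma exists_equivariant_proj [Fintype Γ] (ρ : Representation ℂ Γ V) (N : Subgroup Γ)
    (Y : Submodule ℂ V) (hY : ∀ n ∈ N, ∀ v ∈ Y, ρ n v ∈ Y) :
    ∃ π : V →ₗ[ℂ] V, (∀ v, π v ∈ Y) ∧ (∀ y ∈ Y, π y = y) ∧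
      ∀ n ∈ N, ∀ v, π (ρ n v) = ρ n (π v) := by
  classical
  obtain ⟨C, hC⟩ := Submodule.exists_isCompl Y
  set p : V →ₗ[ℂ] V := Y.subtype ∘ₗ Y.projectionOnto C hC with hp
  have hpY : ∀ v, p v ∈ Y := fun v => (Y.projectionOnto C hC v).2
  have hpid : ∀ y ∈ Y, p y = y := by
    intro y hy
    show Y.subtype (Y.projectionOnto C hC y) = y
    rw [show y = ((⟨y, hy⟩ : Y) : V) from rfl, Submodule.linearProjOfIsCompl_apply_left hC]
    rfl
  haveI : Fintype N := Fintype.ofFinite _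
  have hcard : ((Fintype.card N : ℂ)) ≠ 0 := by
    simpa using Fintype.card_ne_zero (α := N)
  set π : V →ₗ[ℂ] V :=
    (Fintype.card N : ℂ)⁻¹ • ∑ n : N, ρ (n : Γ) ∘ₗ p ∘ₗ ρ ((n : Γ)⁻¹) with hπ
  have hπ_apply : ∀ v, π v = (Fintype.card N : ℂ)⁻¹ •
      ∑ n : N, ρ (n : Γ) (p (ρ ((n : Γ)⁻¹) v)) := by
    intro v
    simp [hπ, LinearMap.sum_apply]
  refine ⟨π, ?_, ?_, ?_⟩
  · intro v
    rw [hπ_apply]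
    refine Submodule.smul_mem _ _ (Submodule.sum_mem _ fun n _ => ?_)
    exact hY (n : Γ) n.2 _ (hpY _)
  · intro y hy
    rw [hπ_apply]
    have : ∀ n : N, ρ (n : Γ) (p (ρ ((n : Γ)⁻¹) y)) = y := by
      intro n
      rw [hpid _ (hY _ (N.inv_mem n.2) y hy), rho_mul_apply, mul_inv_cancel, map_one,
        Module.End.one_apply]
    rw [Finset.sum_congr rfl (fun n _ => this n), Finset.sum_const, Finset.card_univ,
      ← Nat.cast_smul_eq_nsmul ℂ, smul_smul, inv_mul_cancel₀ hcard, one_smul]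
  · intro g hg v
    rw [hπ_apply, hπ_apply, map_smul]
    congr 1
    rw [map_sum]
    refine Fintype.sum_equiv (Equiv.mulLeft (⟨g, hg⟩ : N)⁻¹) _ _ fun n => ?_
    show ρ (n : Γ) (p (ρ ((n : Γ)⁻¹) (ρ g v)))
      = ρ g (ρ ((((⟨g, hg⟩ : N)⁻¹ * n : N) : Γ)) (p (ρ ((((⟨g, hg⟩ : N)⁻¹ * n : N) : Γ)⁻¹) v)))
    have hcoe : ((((⟨g, hg⟩ : N)⁻¹ * n : N) : Γ)) = g⁻¹ * (n : Γ) := rfl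
    rw [hcoe, rho_mul_apply, rho_mul_apply]
    have e1 : (n : Γ)⁻¹ * g = (g⁻¹ * (n : Γ))⁻¹ := by group
    have e2 : g * (g⁻¹ * (n : Γ)) = (n : Γ) := by group
    rw [e1, e2]

lemma exists_irred_sub [FiniteDimensional ℂ V] (ρ : Representation ℂ Γ V) (N : Subgroup Γ) :
    ∀ (k : ℕ) (Z : Submodule ℂ V), Module.finrank ℂ Z ≤ k → Z ≠ ⊥ →
      ∀ (hZ : ∀ n ∈ N, ∀ v ∈ Z, ρ n v ∈ Z),
      ∃ (Y : Submodule ℂ V) (hY : ∀ n ∈ N, ∀ v ∈ Y, ρ n v ∈ Y), Y ≤ Z ∧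
        IsIrredRep (subRep ρ N Y hY) := by
  intro k
  induction k with
  | zero =>
    intro Z hr hne _
    exact absurd (Submodule.finrank_eq_zero.mp (Nat.le_zero.mp hr)) hne
  | succ k ih =>
    intro Z hr hne hZ
    by_cases hirr : IsIrredRep (subRep ρ N Z hZ)
    · exact ⟨Z, hZ, le_rfl, hirr⟩
    · haveI hnt : Nontrivial Z := Submodule.nontrivial_iff_ne_bot.mpr hne
      rw [IsIrredRep, not_and_or] at hirr
      rcases hirr with h | h
      · exact absurd hnt h
      push_neg at h
      obtain ⟨U', hU'inv, hU'bot, hU'top⟩ := h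
      set Z' := U'.map Z.subtype with hZ'
      have hZ'le : Z' ≤ Z := by
        rintro v ⟨z, hz, rfl⟩
        exact z.2
      have hZ'inv : ∀ n ∈ N, ∀ v ∈ Z', ρ n v ∈ Z' := by
        rintro n hn v ⟨z, hz, rfl⟩
        exact ⟨subRep ρ N Z hZ ⟨n, hn⟩ z, hU'inv ⟨n, hn⟩ z hz, rfl⟩
      have hZ'ne : Z' ≠ ⊥ := by
        obtain ⟨x, hx, hx0⟩ := (Submodule.ne_bot_iff _).mp hU'bot
        refine (Submodule.ne_bot_iff _).mpr ⟨(x : V), ⟨x, hx, rfl⟩, ?_⟩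
        simpa using hx0
      have hZ'lt : Z' < Z := by
        refine lt_of_le_of_ne hZ'le fun hEq => hU'top ?_
        have h2 : Submodule.map Z.subtype U' = Submodule.map Z.subtype ⊤ := by
          rw [Submodule.map_subtype_top]; exact hEq
        exact Submodule.map_injective_of_injective Z.injective_subtype h2
      have hr' : Module.finrank ℂ Z' ≤ k := by
        have := Submodule.finrank_lt_finrank_of_lt hZ'lt
        omega
      obtain ⟨Y, hY, hYle, hYirr⟩ := ih Z' hr' hZ'ne hZ'inv
      exact ⟨Y, hY, hYle.trans hZ'le, hYirr⟩

lemma exists_iso_of_le_iSup [Fintype Γ] (ρ : Representation ℂ Γ V) (N : Subgroup Γ)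
    {ι : Type} (U : ι → Submodule ℂ V)
    (hU : ∀ i, ∀ n ∈ N, ∀ v ∈ U i, ρ n v ∈ U i)
    (hUirr : ∀ i, IsIrredRep (subRep ρ N (U i) (hU i)))
    (Y : Submodule ℂ V) (hY : ∀ n ∈ N, ∀ v ∈ Y, ρ n v ∈ Y)
    (hYirr : IsIrredRep (subRep ρ N Y hY)) (hle : Y ≤ ⨆ i, U i) :
    ∃ i, RepIso (subRep ρ N (U i) (hU i)) (subRep ρ N Y hY) := by
  obtain ⟨π, hπY, hπid, hπeq⟩ := exists_equivariant_proj ρ N Y hY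
  have hYne : Y ≠ ⊥ := Submodule.nontrivial_iff_ne_bot.mp hYirr.1
  obtain ⟨y0, hy0Y, hy0⟩ := (Submodule.ne_bot_iff _).mp hYne
  have hex : ¬ (∀ i, ∀ u ∈ U i, π u = 0) := by
    intro h
    have hker : Y ≤ LinearMap.ker π :=
      hle.trans (iSup_le fun i u hu => LinearMap.mem_ker.mpr (h i u hu))
    exact hy0 (by rw [← hπid y0 hy0Y]; exact LinearMap.mem_ker.mp (hker hy0Y))
  push_neg at hex
  obtain ⟨i, u0, hu0U, hu0⟩ := hex
  set f : U i →ₗ[ℂ] Y := LinearMap.codRestrict Y (π ∘ₗ (U i).subtype) (fun u => hπY _) with hf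
  have hfval : ∀ u : U i, ((f u : Y) : V) = π (u : V) := fun u => rfl
  have hker : ∀ (n : N), ∀ u ∈ LinearMap.ker f, subRep ρ N (U i) (hU i) n u ∈ LinearMap.ker f := by
    intro n u hu
    have h0 : π (u : V) = 0 := by
      have := congrArg Subtype.val (LinearMap.mem_ker.mp hu)
      simpa [hfval] using this
    rw [LinearMap.mem_ker]
    apply Subtype.ext
    rw [hfval]
    show π (ρ (n : Γ) (u : V)) = (0 : V)
    rw [hπeq _ n.2, h0, map_zero]
  have hinj : Function.Injective f := by
    rw [← LinearMap.ker_eq_bot]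
    rcases (hUirr i).2 (LinearMap.ker f) hker with h | h
    · exact h
    · exfalso
      have : (⟨u0, hu0U⟩ : U i) ∈ LinearMap.ker f := by rw [h]; trivial
      have := congrArg Subtype.val (LinearMap.mem_ker.mp this)
      rw [hfval] at this
      exact hu0 this
  have hrg : ∀ (n : N), ∀ y ∈ LinearMap.range f, subRep ρ N Y hY n y ∈ LinearMap.range f := by
    rintro n y ⟨u, rfl⟩
    refine ⟨subRep ρ N (U i) (hU i) n u, Subtype.ext ?_⟩
    rw [hfval]
    show π (ρ (n : Γ) (u : V)) = ρ (n : Γ) ((f u : Y) : V)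
    rw [hπeq _ n.2, hfval]
  have hsurj : Function.Surjective f := by
    rw [← LinearMap.range_eq_top]
    rcases hYirr.2 (LinearMap.range f) hrg with h | h
    · exfalso
      have : f ⟨u0, hu0U⟩ ∈ LinearMap.range f := ⟨_, rfl⟩
      rw [h, Submodule.mem_bot] at this
      have := congrArg Subtype.val this
      rw [hfval] at this
      exact hu0 this
    · exact h
  refine ⟨i, LinearEquiv.ofBijective f ⟨hinj, hsurj⟩, fun n u => Subtype.ext ?_⟩
  show π (ρ (n : Γ) (u : V)) = ρ (n : Γ) (π (u : V))
  exact hπeq _ n.2 _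

end ProjLemmas

/-- The averaging map from the induced representation space back to `V`. -/
def psiMap {Γ V : Type} [Group Γ] [Fintype Γ] [AddCommGroup V] [Module ℂ V]
    (ρ : Representation ℂ Γ V) (Δ : Subgroup Γ) (S : Submodule ℂ V)
    (σ : Representation ℂ Δ S) : (indSubmodule Δ σ) →ₗ[ℂ] V where
  toFun f := ∑ γ : Γ, ρ γ⁻¹ ((f : Γ → S) γ : V)
  map_add' f g := by
    rw [← Finset.sum_add_distrib]
    refine Finset.sum_congr rfl fun γ _ => ?_
    have h : (((f + g : indSubmodule Δ σ) : Γ → S) γ : V)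
        = ((f : Γ → S) γ : V) + ((g : Γ → S) γ : V) := rfl
    rw [h, map_add]
  map_smul' c f := by
    rw [Finset.smul_sum]
    refine Finset.sum_congr rfl fun γ _ => ?_
    have h : (((c • f : indSubmodule Δ σ) : Γ → S) γ : V) = c • ((f : Γ → S) γ : V) := rfl
    rw [h, map_smul]
    rfl

/-- Clifford's theorem: let `ρ` be an irreducible complex representation of a finite group
`Γ` on `V`, let `N ⊴ Γ`, let `W ≤ V` be an irreducible `N`-subrepresentation `τ` of `ρ|_N`,
let `S` be the `τ`-isotypic component of `ρ|_N` (the sum of all `N`-subrepresentations of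
`ρ|_N` isomorphic to `τ`), and let `Δ = {g ∈ Γ | τ^g ≅ τ}` be the stabilizer of the
isomorphism class of `τ`.  Then `S` is invariant under `ρ(Δ)` and, as a representation of
`Δ`, satisfies `ρ ≅ Ind_Δ^Γ S`. -/
theorem stmt_11 (Γ : Type) [Group Γ] [Fintype Γ]
    (V : Type) [AddCommGroup V] [Module ℂ V] [FiniteDimensional ℂ V]
    (ρ : Representation ℂ Γ V) (hρ : IsIrredRep ρ)
    (N : Subgroup Γ) (hN : N.Normal)
    (W : Submodule ℂ V) (hW : ∀ n ∈ N, ∀ v ∈ W, ρ n v ∈ W)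
    (hτ : IsIrredRep (subRep ρ N W hW))
    (S : Submodule ℂ V)
    (hS : S = sSup {U : Submodule ℂ V |
      ∃ hU : ∀ n ∈ N, ∀ v ∈ U, ρ n v ∈ U, RepIso (subRep ρ N U hU) (subRep ρ N W hW)})
    (Δ : Subgroup Γ)
    (hΔ : ∀ g : Γ, g ∈ Δ ↔ RepIso (conjSubRep ρ N hN W hW g) (subRep ρ N W hW)) :
    ∃ hSΔ : ∀ d ∈ Δ, ∀ v ∈ S, ρ d v ∈ S,
      RepIso ρ (indRep Δ (subRep ρ Δ S hSΔ)) := by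
  classical
  set 𝒮 : Set (Submodule ℂ V) := {U : Submodule ℂ V |
      ∃ hU : ∀ n ∈ N, ∀ v ∈ U, ρ n v ∈ U, RepIso (subRep ρ N U hU) (subRep ρ N W hW)}
    with h𝒮
  have hSsup : S = sSup 𝒮 := hS
  have hW𝒮 : W ∈ 𝒮 := ⟨hW, repIso_refl _⟩
  have hmapS : ∀ (g : Γ), ∀ U ∈ 𝒮, ∃ h' : ∀ n ∈ N, ∀ v ∈ U.map (ρ g), ρ n v ∈ U.map (ρ g),
      RepIso (subRep ρ N (U.map (ρ g)) h') (conjSubRep ρ N hN W hW g) := by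
    rintro g U ⟨hU, hUiso⟩
    exact ⟨map_invariant ρ N hN U hU g,
      repIso_trans (repIso_symm (conj_map_iso ρ N hN U hU g))
        (conj_iso_of_iso ρ N hN U hU W hW g hUiso)⟩
  have hSΔ : ∀ d ∈ Δ, ∀ v ∈ S, ρ d v ∈ S := by
    intro d hd v hv
    have hle : S.map (ρ d) ≤ S := by
      conv_lhs => rw [hSsup]
      rw [sSup_eq_iSup', Submodule.map_iSup, hSsup]
      refine iSup_le ?_
      rintro ⟨U, hU⟩
      refine le_sSup ?_
      obtain ⟨h', hiso⟩ := hmapS d U hU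
      exact ⟨h', repIso_trans hiso ((hΔ d).mp hd)⟩
    exact hle ⟨v, hv, rfl⟩
  refine ⟨hSΔ, ?_⟩
  have hNΔ : ∀ n ∈ N, n ∈ Δ := by
    intro n hn
    rw [hΔ]
    set f : W →ₗ[ℂ] W := (ρ n).restrict (fun v hv => hW n hn v hv) with hf
    have hfval : ∀ w : W, ((f w : W) : V) = ρ n (w : V) := fun w => rfl
    have hbij : Function.Bijective f := by
      constructor
      · intro a b hab
        have h2 := congrArg Subtype.val hab
        rw [hfval, hfval] at h2
        exact Subtype.ext (rho_inj ρ n h2)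
      · intro w
        refine ⟨⟨ρ n⁻¹ (w : V), hW n⁻¹ (N.inv_mem hn) _ w.2⟩, Subtype.ext ?_⟩
        rw [hfval]
        show ρ n (ρ n⁻¹ (w : V)) = (w : V)
        rw [rho_mul_apply, mul_inv_cancel, map_one, Module.End.one_apply]
    refine ⟨LinearEquiv.ofBijective f hbij, fun m w => Subtype.ext ?_⟩
    show ρ n (ρ (n⁻¹ * (m : Γ) * n) (w : V)) = ρ (m : Γ) (ρ n (w : V))
    rw [rho_mul_apply, rho_mul_apply]
    congr 1
    group
  have hSN : ∀ n ∈ N, ∀ v ∈ S, ρ n v ∈ S := fun n hn => hSΔ n (hNΔ n hn)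
  have hSd : ∀ d ∈ Δ, S.map (ρ d) = S := by
    intro d hd
    refine le_antisymm ?_ ?_
    · rintro v ⟨u, hu, rfl⟩; exact hSΔ d hd u hu
    · intro v hv
      refine ⟨ρ d⁻¹ v, hSΔ d⁻¹ (Δ.inv_mem hd) v hv, ?_⟩
      rw [rho_mul_apply, mul_inv_cancel, map_one, Module.End.one_apply]
  have hmap_mul : ∀ (a b : Γ) (P : Submodule ℂ V),
      P.map (ρ (a * b)) = (P.map (ρ b)).map (ρ a) := by
    intro a b P
    rw [map_mul, Module.End.mul_eq_comp, Submodule.map_comp]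
  set T : Γ ⧸ Δ → Submodule ℂ V := fun c => S.map (ρ c.out) with hTdef
  have hT : ∀ g : Γ, T (QuotientGroup.mk g) = S.map (ρ g) := by
    intro g
    have hδ : g⁻¹ * (QuotientGroup.mk g : Γ ⧸ Δ).out ∈ Δ :=
      QuotientGroup.eq.mp (QuotientGroup.out_eq' (QuotientGroup.mk g : Γ ⧸ Δ)).symm
    have heq : (QuotientGroup.mk g : Γ ⧸ Δ).out
        = g * (g⁻¹ * (QuotientGroup.mk g : Γ ⧸ Δ).out) := by group
    show S.map (ρ ((QuotientGroup.mk g : Γ ⧸ Δ).out)) = S.map (ρ g)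
    rw [heq, hmap_mul, hSd _ hδ]
  have hTinv : ∀ (c : Γ ⧸ Δ), ∀ n ∈ N, ∀ v ∈ T c, ρ n v ∈ T c :=
    fun c => map_invariant ρ N hN S hSN c.out
  have hWle : W ≤ S := by rw [hSsup]; exact le_sSup hW𝒮
  obtain ⟨w0, hw0W, hw0⟩ :=
    (Submodule.ne_bot_iff _).mp (Submodule.nontrivial_iff_ne_bot.mp hτ.1)
  have hw0S : w0 ∈ S := hWle hw0W
  have hTtop : (⨆ c, T c) = ⊤ := by
    have hinv : ∀ g : Γ, ∀ v ∈ (⨆ c, T c), ρ g v ∈ (⨆ c, T c) := by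
      intro g v hv
      have h1 : ρ g v ∈ (⨆ c, T c).map (ρ g) := Submodule.mem_map_of_mem hv
      rw [Submodule.map_iSup] at h1
      have hle3 : (⨆ c, (T c).map (ρ g)) ≤ ⨆ c, T c := by
        refine iSup_le fun c => ?_
        have h2 : (T c).map (ρ g) = T (QuotientGroup.mk (g * c.out)) := by
          rw [hT, hmap_mul]
        rw [h2]
        exact le_iSup T _
      exact hle3 h1
    rcases hρ.2 _ hinv with h | h
    · exfalso
      have hmem : w0 ∈ T (QuotientGroup.mk 1) := by
        rw [hT, map_one]
        exact ⟨w0, hw0S, rfl⟩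
      have := Submodule.mem_iSup_of_mem (QuotientGroup.mk 1) hmem
      rw [h] at this
      exact hw0 (by simpa using this)
    · exact h
  -- the translate-isotypic identification
  have hiso_of_le : ∀ (h : Γ) (Y' : Submodule ℂ V) (hY' : ∀ n ∈ N, ∀ v ∈ Y', ρ n v ∈ Y'),
      IsIrredRep (subRep ρ N Y' hY') → Y' ≤ S.map (ρ h) →
      RepIso (conjSubRep ρ N hN W hW h) (subRep ρ N Y' hY') := by
    intro h Y' hY' hY'irr hle
    have hle2 : Y' ≤ ⨆ U : 𝒮, (U : Submodule ℂ V).map (ρ h) := by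
      rwa [hSsup, sSup_eq_iSup', Submodule.map_iSup] at hle
    obtain ⟨i, hiso⟩ := exists_iso_of_le_iSup ρ N
      (fun U : 𝒮 => (U : Submodule ℂ V).map (ρ h))
      (fun U => map_invariant ρ N hN U.1 U.2.choose h)
      (fun U => repIso_irred (hmapS h U.1 U.2).choose_spec (conj_irred ρ N hN W hW h hτ))
      Y' hY' hY'irr hle2
    exact repIso_trans (repIso_symm (hmapS h i.1 i.2).choose_spec) hiso
  have hdisj : ∀ (c₀ : Γ ⧸ Δ) (v : V), v ∈ T c₀ → v ∈ (⨆ c, ⨆ (_ : c ≠ c₀), T c) → v = 0 := by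
    intro c₀
    suffices hZ : T c₀ ⊓ (⨆ c, ⨆ (_ : c ≠ c₀), T c) = ⊥ by
      intro v h1 h2
      have hv : v ∈ T c₀ ⊓ (⨆ c, ⨆ (_ : c ≠ c₀), T c) := ⟨h1, h2⟩
      rw [hZ] at hv
      simpa using hv
    by_contra hZne
    have hsupinv : ∀ n ∈ N, ∀ v ∈ (⨆ c, ⨆ (_ : c ≠ c₀), T c),
        ρ n v ∈ (⨆ c, ⨆ (_ : c ≠ c₀), T c) := by
      intro n hn v hv
      have h1 : ρ n v ∈ (⨆ c, ⨆ (_ : c ≠ c₀), T c).map (ρ n) := Submodule.mem_map_of_mem hv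
      rw [Submodule.map_iSup] at h1
      simp_rw [Submodule.map_iSup] at h1
      have hmle : ∀ c : Γ ⧸ Δ, (T c).map (ρ n) ≤ T c := by
        rintro c x ⟨u, hu, rfl⟩
        exact hTinv c n hn u hu
      exact (iSup_mono fun c => iSup_mono fun _ => hmle c) h1
    have hZinv : ∀ n ∈ N, ∀ v ∈ T c₀ ⊓ (⨆ c, ⨆ (_ : c ≠ c₀), T c),
        ρ n v ∈ T c₀ ⊓ (⨆ c, ⨆ (_ : c ≠ c₀), T c) :=
      fun n hn v hv => ⟨hTinv c₀ n hn v hv.1, hsupinv n hn v hv.2⟩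
    obtain ⟨Y, hY, hYle, hYirr⟩ := exists_irred_sub ρ N (Module.finrank ℂ V)
      (T c₀ ⊓ (⨆ c, ⨆ (_ : c ≠ c₀), T c)) (Submodule.finrank_le _) hZne hZinv
    have hisoc₀ : RepIso (conjSubRep ρ N hN W hW c₀.out) (subRep ρ N Y hY) :=
      hiso_of_le c₀.out Y hY hYirr (hYle.trans inf_le_left)
    have hle₂ : Y ≤ ⨆ p : {h : Γ // (QuotientGroup.mk h : Γ ⧸ Δ) ≠ c₀} × 𝒮,
        ((p.2 : Submodule ℂ V)).map (ρ (p.1 : Γ)) := by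
      refine (hYle.trans inf_le_right).trans (iSup_le fun c => iSup_le fun hc => ?_)
      have h1 : T c = S.map (ρ c.out) := rfl
      rw [h1, hSsup, sSup_eq_iSup', Submodule.map_iSup]
      refine iSup_le fun U => ?_
      have hc' : (QuotientGroup.mk c.out : Γ ⧸ Δ) ≠ c₀ := by
        rw [QuotientGroup.out_eq']; exact hc
      exact le_iSup (fun p : {h : Γ // (QuotientGroup.mk h : Γ ⧸ Δ) ≠ c₀} × 𝒮 =>
        ((p.2 : Submodule ℂ V)).map (ρ (p.1 : Γ))) (⟨⟨c.out, hc'⟩, U⟩)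
    obtain ⟨p, hisop⟩ := exists_iso_of_le_iSup ρ N
      (fun p : {h : Γ // (QuotientGroup.mk h : Γ ⧸ Δ) ≠ c₀} × 𝒮 =>
        ((p.2 : Submodule ℂ V)).map (ρ (p.1 : Γ)))
      (fun p => map_invariant ρ N hN p.2.1 p.2.2.choose p.1.1)
      (fun p => repIso_irred (hmapS p.1.1 p.2.1 p.2.2).choose_spec
        (conj_irred ρ N hN W hW p.1.1 hτ))
      Y hY hYirr hle₂
    have hisoh' : RepIso (conjSubRep ρ N hN W hW p.1.1) (subRep ρ N Y hY) :=
      repIso_trans (repIso_symm (hmapS p.1.1 p.2.1 p.2.2).choose_spec) hisop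
    have hcomb : RepIso (conjSubRep ρ N hN W hW c₀.out) (conjSubRep ρ N hN W hW p.1.1) :=
      repIso_trans hisoc₀ (repIso_symm hisoh')
    have hΔmem : c₀.out⁻¹ * p.1.1 ∈ Δ := by
      rw [hΔ]
      exact repIso_symm (conj_conj_iso ρ N hN W hW c₀.out p.1.1 hcomb)
    have hqe : (QuotientGroup.mk c₀.out : Γ ⧸ Δ) = QuotientGroup.mk p.1.1 :=
      QuotientGroup.eq.mpr hΔmem
    rw [QuotientGroup.out_eq'] at hqe
    exact p.1.2 hqe.symm
  -- the averaging map
  set σ : Representation ℂ Δ S := subRep ρ Δ S hSΔ with hσdef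
  set Ψ : (indSubmodule Δ σ) →ₗ[ℂ] V := psiMap ρ Δ S σ with hΨdef
  have hΨapply : ∀ f : indSubmodule Δ σ,
      Ψ f = ∑ γ : Γ, ρ γ⁻¹ (((f : Γ → S) γ : V)) := fun f => rfl
  have hind : ∀ (f : indSubmodule Δ σ) (δ : Δ) (g : Γ),
      (f : Γ → S) ((δ : Γ) * g) = σ δ ((f : Γ → S) g) := fun f => f.2
  have hΨequiv : ∀ (g : Γ) (f : indSubmodule Δ σ), Ψ (indRep Δ σ g f) = ρ g (Ψ f) := by
    intro g f
    rw [hΨapply, hΨapply, map_sum]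
    refine Fintype.sum_equiv (Equiv.mulRight g) _ _ fun x => ?_
    simp only [Equiv.coe_mulRight]
    have h1 : ((indRep Δ σ g f : Γ → S) x : V) = ((f : Γ → S) (x * g) : V) := rfl
    rw [h1, rho_mul_apply]
    have h2 : g * (x * g)⁻¹ = x⁻¹ := by group
    rw [h2]
  have hΨinj : Function.Injective Ψ := by
    rw [← LinearMap.ker_eq_bot, eq_bot_iff]
    intro f hf
    have hf0 : Ψ f = 0 := LinearMap.mem_ker.mp hf
    rw [Submodule.mem_bot]
    have key : ∀ γ₀ : Γ, (f : Γ → S) γ₀ = 0 := by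
      intro γ₀
      set F : Γ ⧸ Δ → V := fun c => ∑ γ ∈ Finset.univ.filter
          (fun γ => (QuotientGroup.mk γ⁻¹ : Γ ⧸ Δ) = c), ρ γ⁻¹ (((f : Γ → S) γ : V)) with hFdef
      have hsum : ∑ c : Γ ⧸ Δ, F c = 0 := by
        simp only [hFdef]
        rw [Finset.sum_fiberwise]
        rw [hΨapply] at hf0
        exact hf0
      have hFmem : ∀ c, F c ∈ T c := by
        intro c
        rw [hFdef]
        refine Submodule.sum_mem _ fun γ hγ => ?_
        have hqγ : (QuotientGroup.mk γ⁻¹ : Γ ⧸ Δ) = c := (Finset.mem_filter.mp hγ).2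
        rw [← hqγ, hT]
        exact Submodule.mem_map_of_mem ((f : Γ → S) γ).2
      have hF0 : ∀ c, F c = 0 := by
        intro c
        have h1 : F c = - ∑ c' ∈ Finset.univ.erase c, F c' := by
          apply eq_neg_of_add_eq_zero_left
          rw [Finset.add_sum_erase _ F (Finset.mem_univ c)]
          exact hsum
        have h2 : F c ∈ ⨆ c', ⨆ (_ : c' ≠ c), T c' := by
          rw [h1]
          refine neg_mem (Submodule.sum_mem _ fun c' hc' => ?_)
          exact Submodule.mem_iSup_of_mem c'
            (Submodule.mem_iSup_of_mem (Finset.ne_of_mem_erase hc') (hFmem c'))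
        exact hdisj c _ (hFmem c) h2
      have hterm : ∀ γ ∈ Finset.univ.filter
          (fun γ => (QuotientGroup.mk γ⁻¹ : Γ ⧸ Δ) = QuotientGroup.mk γ₀⁻¹),
          ρ γ⁻¹ (((f : Γ → S) γ : V)) = ρ γ₀⁻¹ (((f : Γ → S) γ₀ : V)) := by
        intro γ hγ
        have hqγ : (QuotientGroup.mk γ⁻¹ : Γ ⧸ Δ) = QuotientGroup.mk γ₀⁻¹ :=
          (Finset.mem_filter.mp hγ).2
        have hδ : γ * γ₀⁻¹ ∈ Δ := by
          have := QuotientGroup.eq.mp hqγ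
          simpa using this
        have hfγ : ((f : Γ → S) γ : V) = ρ (γ * γ₀⁻¹) (((f : Γ → S) γ₀ : V)) := by
          conv_lhs => rw [show γ = ((⟨γ * γ₀⁻¹, hδ⟩ : Δ) : Γ) * γ₀ by group]
          rw [hind f ⟨γ * γ₀⁻¹, hδ⟩ γ₀]
          rfl
        rw [hfγ, rho_mul_apply]
        have h3 : γ⁻¹ * (γ * γ₀⁻¹) = γ₀⁻¹ := by group
        rw [h3]
      have hcardpos : 0 < (Finset.univ.filter
          (fun γ => (QuotientGroup.mk γ⁻¹ : Γ ⧸ Δ) = QuotientGroup.mk γ₀⁻¹)).card :=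
        Finset.card_pos.mpr ⟨γ₀, Finset.mem_filter.mpr ⟨Finset.mem_univ _, rfl⟩⟩
      have hzero : ρ γ₀⁻¹ (((f : Γ → S) γ₀ : V)) = 0 := by
        have h3 := hF0 (QuotientGroup.mk γ₀⁻¹)
        simp only [hFdef] at h3
        rw [Finset.sum_congr rfl hterm, Finset.sum_const] at h3
        rw [← Nat.cast_smul_eq_nsmul ℂ] at h3
        rcases smul_eq_zero.mp h3 with h | h
        · exact absurd h (by exact_mod_cast hcardpos.ne')
        · exact h
      have h4 := rho_inj ρ γ₀⁻¹ (hzero.trans (map_zero (ρ γ₀⁻¹)).symm)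
      exact Subtype.ext h4
    exact Subtype.ext (funext key)
  have hfw : (fun γ => if h : γ ∈ Δ then (⟨ρ γ w0, hSΔ γ h w0 hw0S⟩ : S) else 0)
      ∈ indSubmodule Δ σ := by
    intro δ g
    show (if h : (δ : Γ) * g ∈ Δ then (⟨ρ ((δ : Γ) * g) w0, hSΔ _ h w0 hw0S⟩ : S) else 0)
        = σ δ (if h : g ∈ Δ then (⟨ρ g w0, hSΔ g h w0 hw0S⟩ : S) else 0)
    by_cases hg : g ∈ Δ
    · have h1 : (δ : Γ) * g ∈ Δ := Δ.mul_mem δ.2 hg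
      rw [dif_pos h1, dif_pos hg]
      apply Subtype.ext
      show ρ ((δ : Γ) * g) w0 = ρ (δ : Γ) (ρ g w0)
      rw [rho_mul_apply]
    · have h1 : ¬ ((δ : Γ) * g ∈ Δ) := fun h => hg ((mul_mem_cancel_left δ.2).mp h)
      rw [dif_neg h1, dif_neg hg, map_zero]
  have hΨne : Ψ ⟨_, hfw⟩ ≠ 0 := by
    rw [hΨapply]
    have hcongr : ∀ γ ∈ Finset.univ,
        ρ γ⁻¹ ((((⟨_, hfw⟩ : indSubmodule Δ σ) : Γ → S) γ : V))
        = if γ ∈ Δ then w0 else 0 := by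
      intro γ _
      by_cases hg : γ ∈ Δ
      · rw [if_pos hg]
        have h1 : ((((⟨_, hfw⟩ : indSubmodule Δ σ) : Γ → S) γ : V)) = ρ γ w0 := by
          show ((if h : γ ∈ Δ then (⟨ρ γ w0, hSΔ γ h w0 hw0S⟩ : S) else 0 : S) : V) = ρ γ w0
          rw [dif_pos hg]
        rw [h1, rho_mul_apply, inv_mul_cancel, map_one, Module.End.one_apply]
      · rw [if_neg hg]
        have h1 : ((((⟨_, hfw⟩ : indSubmodule Δ σ) : Γ → S) γ : V)) = (0 : V) := by
          show ((if h : γ ∈ Δ then (⟨ρ γ w0, hSΔ γ h w0 hw0S⟩ : S) else 0 : S) : V) = 0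
          rw [dif_neg hg]
          rfl
        rw [h1, map_zero]
    rw [Finset.sum_congr rfl hcongr, Finset.sum_ite, Finset.sum_const, Finset.sum_const_zero,
      add_zero]
    intro hcontra
    rw [← Nat.cast_smul_eq_nsmul ℂ] at hcontra
    rcases smul_eq_zero.mp hcontra with h | h
    · have hpos : 0 < (Finset.univ.filter (fun γ => γ ∈ Δ)).card :=
        Finset.card_pos.mpr ⟨1, Finset.mem_filter.mpr ⟨Finset.mem_univ _, Δ.one_mem⟩⟩
      exact absurd h (by exact_mod_cast hpos.ne')
    · exact hw0 h
  have hΨsurj : Function.Surjective Ψ := by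
    rw [← LinearMap.range_eq_top]
    have hinv : ∀ g : Γ, ∀ v ∈ LinearMap.range Ψ, ρ g v ∈ LinearMap.range Ψ := by
      rintro g v ⟨fv, rfl⟩
      exact ⟨indRep Δ σ g fv, hΨequiv g fv⟩
    rcases hρ.2 _ hinv with h | h
    · exfalso
      apply hΨne
      have hmem : Ψ ⟨_, hfw⟩ ∈ LinearMap.range Ψ := ⟨_, rfl⟩
      rw [h, Submodule.mem_bot] at hmem
      exact hmem
    · exact h
  set e : V ≃ₗ[ℂ] (indSubmodule Δ σ) :=
    (LinearEquiv.ofBijective Ψ ⟨hΨinj, hΨsurj⟩).symm with he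
  have heval : ∀ x, Ψ (e x) = x := fun x =>
    (LinearEquiv.ofBijective Ψ ⟨hΨinj, hΨsurj⟩).apply_symm_apply x
  refine ⟨e, fun g v => hΨinj ?_⟩
  rw [heval, hΨequiv, heval]
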